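/- Let λ ≥ ω₁ be an ordinal and g : λ^{<ω} → λ a function. The set of reals { x ∈ ω^ω : the structure (ω, E_x) is isomorphic to (σ, ∈) for some g-closed countable subset σ of λ } is the projection onto the first coordinate of a closed subset of ω^ω × λ^ω × ω^ω, namely the set of triples (x, h, y) such that h is an embedding of (ω, E_x) into (λ, ∈) and for all n < ω, g[ { h(i) : i < n }^{<n} ] ⊆ { h(i) : i < y(n) }. Here E_x is the binary relation on ω defined by (m,n) ∈ E_x iff x(⟨m,n⟩) = 0 for a fixed recursive pairing ⟨·,·⟩. -/

import Mathlib

/-- The binary relation on `ω` coded by a real: `E_x(m,n) ↔ x(⟨m,n⟩) = 0`. -/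
def Ex (x : ℕ → ℕ) (m n : ℕ) : Prop := x (Nat.pair m n) = 0

/-- `σ` is `g`-closed: `g[σ^{<ω}] ⊆ σ`. -/
def GClosed {l : Ordinal} (g : List ↥(Set.Iio l) → ↥(Set.Iio l))
    (σ : Set ↥(Set.Iio l)) : Prop :=
  ∀ lst : List ↥(Set.Iio l), (∀ a ∈ lst, a ∈ σ) → g lst ∈ σ

/-- The set of triples `(x, h, y)` such that `h` is an embedding of `(ω, E_x)` into
`(λ, ∈)` and `y` witnesses the lookahead: for all `n`,
`g[{h i : i < n}^{<n}] ⊆ {h i : i < y n}`. -/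
def tripleSet (l : Ordinal) (g : List ↥(Set.Iio l) → ↥(Set.Iio l)) :
    Set ((ℕ → ℕ) × (ℕ → ↥(Set.Iio l)) × (ℕ → ℕ)) :=
  {p | Function.Injective p.2.1 ∧
    (∀ m n : ℕ, Ex p.1 m n ↔ p.2.1 m < p.2.1 n) ∧
    (∀ n : ℕ, ∀ lst : List ↥(Set.Iio l), lst.length < n →
      (∀ a ∈ lst, a ∈ (List.range n).map p.2.1) →
      g lst ∈ (List.range (p.2.2 n)).map p.2.1)}

private lemma mem_range_map {D : Type*} (f : ℕ → D) (m : ℕ) (a : D) :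
    a ∈ (List.range m).map f ↔ ∃ i, i < m ∧ f i = a := by
  simp only [List.mem_map, List.mem_range]

private lemma exists_index_list {D : Type*} (e : ℕ → D) (n : ℕ) :
    ∀ lst : List D, (∀ a ∈ lst, ∃ i, i < n ∧ e i = a) →
      ∃ il : List (Fin n), il.map (fun i => e i.1) = lst := by
  intro lst
  induction lst with
  | nil => exact fun _ => ⟨[], rfl⟩
  | cons a tl ih =>
    intro h
    obtain ⟨il, hil⟩ := ih (fun b hb => h b (List.mem_cons_of_mem _ hb))
    obtain ⟨i, hi, hei⟩ := h a List.mem_cons_self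
    exact ⟨⟨i, hi⟩ :: il, by simp [hil, hei]⟩

private lemma exists_bound {D : Type*} (h : ℕ → D) :
    ∀ lst : List D, (∀ a ∈ lst, a ∈ Set.range h) →
      ∃ n, lst.length < n ∧ ∀ a ∈ lst, ∃ i, i < n ∧ h i = a := by
  intro lst
  induction lst with
  | nil => exact fun _ => ⟨1, by simp, by simp⟩
  | cons a tl ih =>
    intro hmem
    obtain ⟨n, hlen, hidx⟩ := ih (fun b hb => hmem b (List.mem_cons_of_mem _ hb))
    obtain ⟨i, hi⟩ := hmem a List.mem_cons_self
    refine ⟨max (n + 1) (i + 1), by simp; omega, ?_⟩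
    intro b hb
    rcases List.mem_cons.1 hb with rfl | hb
    · exact ⟨i, by omega, hi⟩
    · obtain ⟨j, hj, hjb⟩ := hidx b hb
      exact ⟨j, by omega, hjb⟩

private lemma fin_exists_iff {D : Type*} {N : ℕ} (f : ℕ → D) {m : ℕ} (hm : m ≤ N) (a : D) :
    (∃ i, i < m ∧ f i = a) ↔ (∃ i : Fin N, (i : ℕ) < m ∧ f i = a) := by
  constructor
  · rintro ⟨i, hi, h⟩; exact ⟨⟨i, lt_of_lt_of_le hi hm⟩, hi, h⟩
  · rintro ⟨i, hi, h⟩; exact ⟨i, hi, h⟩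

theorem stmt_10 (l : Ordinal) (hl : (Cardinal.aleph 1).ord ≤ l)
    [TopologicalSpace ↥(Set.Iio l)] [DiscreteTopology ↥(Set.Iio l)]
    (g : List ↥(Set.Iio l) → ↥(Set.Iio l)) :
    IsClosed (tripleSet l g) ∧
    (fun p => p.1) '' tripleSet l g =
      {x : ℕ → ℕ | ∃ σ : Set ↥(Set.Iio l), σ.Countable ∧ GClosed g σ ∧
        ∃ e : ℕ → ↥(Set.Iio l), Function.Injective e ∧ Set.range e = σ ∧
          ∀ m n : ℕ, Ex x m n ↔ e m < e n} := by
  classical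
  let D := ↥(Set.Iio l)
  let X := (ℕ → ℕ) × (ℕ → D) × (ℕ → ℕ)
  constructor
  · -- closedness
    have heq : tripleSet l g =
        (⋂ m, ⋂ n, {p : X | p.2.1 m = p.2.1 n → m = n}) ∩
        ((⋂ m, ⋂ n, {p : X | Ex p.1 m n ↔ p.2.1 m < p.2.1 n}) ∩
         (⋂ n, ⋂ k, {p : X | p.2.2 n = k → ∀ lst : List D, lst.length < n →
            (∀ a ∈ lst, a ∈ (List.range n).map p.2.1) →
            g lst ∈ (List.range k).map p.2.1})) := by
      ext p
      simp only [tripleSet, Set.mem_setOf_eq, Set.mem_inter_iff, Set.mem_iInter]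
      constructor
      · rintro ⟨hinj, hex, hy⟩
        exact ⟨fun m n h => hinj h, hex,
          fun n k hk lst hlen hmem => hk ▸ hy n lst hlen hmem⟩
      · rintro ⟨hinj, hex, hy⟩
        exact ⟨fun m n h => hinj m n h, hex,
          fun n lst hlen hmem => hy n (p.2.2 n) rfl lst hlen hmem⟩
    rw [heq]
    refine IsClosed.inter ?_ (IsClosed.inter ?_ ?_)
    · refine isClosed_iInter fun m => isClosed_iInter fun n => ?_
      have hc : Continuous (fun p : X => (p.2.1 m, p.2.1 n)) := by fun_prop
      exact (isClosed_discrete {q : D × D | q.1 = q.2 → m = n}).preimage hc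
    · refine isClosed_iInter fun m => isClosed_iInter fun n => ?_
      have hc : Continuous (fun p : X => (p.1 (Nat.pair m n), p.2.1 m, p.2.1 n)) := by
        exact ((continuous_apply (Nat.pair m n)).comp continuous_fst).prodMk
          (((continuous_apply m).comp (continuous_fst.comp continuous_snd)).prodMk
            ((continuous_apply n).comp (continuous_fst.comp continuous_snd)))
      exact (isClosed_discrete {q : ℕ × D × D | q.1 = 0 ↔ q.2.1 < q.2.2}).preimage hc
    · refine isClosed_iInter fun n => isClosed_iInter fun k => ?_
      set N := max n k with hN
      have hc : Continuous (fun p : X => (p.2.2 n, fun i : Fin N => p.2.1 i)) := by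
        fun_prop
      have hpre : {p : X | p.2.2 n = k → ∀ lst : List D, lst.length < n →
            (∀ a ∈ lst, a ∈ (List.range n).map p.2.1) →
            g lst ∈ (List.range k).map p.2.1} =
          (fun p : X => (p.2.2 n, fun i : Fin N => p.2.1 i)) ⁻¹'
          {q : ℕ × (Fin N → D) | q.1 = k → ∀ lst : List D, lst.length < n →
            (∀ a ∈ lst, ∃ i : Fin N, (i : ℕ) < n ∧ q.2 i = a) →
            ∃ i : Fin N, (i : ℕ) < k ∧ q.2 i = g lst} := by
        ext p
        simp only [Set.mem_setOf_eq, Set.mem_preimage]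
        constructor
        · intro hp hk lst hlen hmem
          have := hp hk lst hlen (fun a ha => (mem_range_map _ _ _).2
            ((fin_exists_iff _ (le_max_left n k) a).2 (hmem a ha)))
          exact (fin_exists_iff _ (le_max_right n k) _).1 ((mem_range_map _ _ _).1 this)
        · intro hp hk lst hlen hmem
          have := hp hk lst hlen (fun a ha => (fin_exists_iff _ (le_max_left n k) a).1
            ((mem_range_map _ _ _).1 (hmem a ha)))
          exact (mem_range_map _ _ _).2 ((fin_exists_iff _ (le_max_right n k) _).2 this)
      rw [hpre]
      exact (isClosed_discrete _).preimage hc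
  · -- projection equality
    apply Set.Subset.antisymm
    · rintro x ⟨p, hp, rfl⟩
      obtain ⟨hinj, hex, hy⟩ := hp
      refine ⟨Set.range p.2.1, Set.countable_range _, ?_, p.2.1, hinj, rfl, hex⟩
      intro lst hlst
      obtain ⟨n, hlen, hidx⟩ := exists_bound p.2.1 lst hlst
      have := hy n lst hlen (fun a ha => (mem_range_map _ _ _).2 (hidx a ha))
      obtain ⟨i, _, hi⟩ := (mem_range_map _ _ _).1 this
      exact ⟨i, hi⟩
    · rintro x ⟨σ, hσc, hσg, e, hinj, hrange, hex⟩
      have hk : ∀ n : ℕ, ∃ k, ∀ lst : List D, lst.length < n →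
          (∀ a ∈ lst, a ∈ (List.range n).map e) →
          g lst ∈ (List.range k).map e := by
        intro n
        set idx : D → ℕ := fun a => if h : a ∈ Set.range e then h.choose else 0 with hidxdef
        have hS : ((fun il : List (Fin n) => idx (g (il.map fun i => e i.1))) ''
            {il : List (Fin n) | il.length < n}).Finite :=
          (List.finite_length_lt (Fin n) n).image _
        obtain ⟨b, hb⟩ := hS.bddAbove
        refine ⟨b + 1, ?_⟩
        intro lst hlen hmem
        have hmem' : ∀ a ∈ lst, ∃ i, i < n ∧ e i = a :=
          fun a ha => (mem_range_map _ _ _).1 (hmem a ha)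
        obtain ⟨il, hil⟩ := exists_index_list e n lst hmem'
        have hlen' : il.length < n := by
          have : il.length = lst.length := by rw [← hil, List.length_map]
          omega
        have hglst : g lst ∈ Set.range e := by
          rw [hrange]
          apply hσg
          intro a ha
          rw [← hrange]
          obtain ⟨i, _, hi⟩ := hmem' a ha
          exact ⟨i, hi⟩
        have hmemS : idx (g lst) ∈ ((fun il : List (Fin n) => idx (g (il.map fun i => e i.1))) ''
            {il : List (Fin n) | il.length < n}) :=
          ⟨il, hlen', by show idx (g (il.map fun i => e i.1)) = idx (g lst); rw [hil]⟩
        have hle : idx (g lst) ≤ b := hb hmemS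
        refine (mem_range_map _ _ _).2 ⟨idx (g lst), by omega, ?_⟩
        show e (if h : g lst ∈ Set.range e then h.choose else 0) = g lst
        rw [dif_pos hglst]
        exact hglst.choose_spec
      choose y hy using hk
      exact ⟨(x, e, y), ⟨hinj, hex, fun n lst hlen hm => hy n lst hlen hm⟩, rfl⟩
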